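/- arXiv:1110.2557 — 3 statements merged into one kernel-verified Lean document; each statement's English description precedes it below -/
import Mathlib

section
/- The number of linearized polynomials over F_q of degree at most ν (i.e., of the form Σ_{i=0}^{ν} a_i x^{p^i}) that are permutation polynomials of F_q is at least (1 - 1/(p-1) + 1/(q(p-1))) · q^{ν+1}, which in turn is at least q^ν. -/
open Polynomial

section Aux

variable {p m ν : ℕ} {F : Type} [Field F] [Fintype F]

/-- Evaluation of the linearized polynomial. -/
private def linL (p ν : ℕ) (a : Fin (ν + 1) → F) (x : F) : F :=
  ∑ i : Fin (ν + 1), a i * x ^ p ^ (i : ℕ)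

private lemma linL_eval (a : Fin (ν + 1) → F) (x : F) :
    eval x (∑ i : Fin (ν + 1), C (a i) * X ^ p ^ (i : ℕ)) = linL p ν a x := by
  simp [linL, eval_finset_sum]

private lemma linL_add [Fact p.Prime] [CharP F p] (a : Fin (ν + 1) → F) (x y : F) :
    linL p ν a (x + y) = linL p ν a x + linL p ν a y := by
  simp only [linL]
  rw [← Finset.sum_add_distrib]
  refine Finset.sum_congr rfl fun i _ => ?_
  rw [add_pow_char_pow, mul_add]

private lemma linL_zero (hp : p.Prime) (a : Fin (ν + 1) → F) : linL p ν a 0 = 0 := by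
  simp [linL, zero_pow (pow_ne_zero _ hp.ne_zero)]

private lemma linL_nsmul [Fact p.Prime] [CharP F p] (hp : p.Prime)
    (a : Fin (ν + 1) → F) (n : ℕ) (x : F) :
    linL p ν a (n • x) = n • linL p ν a x := by
  induction n with
  | zero => simp [linL_zero hp]
  | succ n ih => rw [succ_nsmul, succ_nsmul, linL_add, ih]

/-- For `x ≠ 0`, exactly `(card F)^ν` coefficient vectors vanish at `x`. -/
private lemma fiber_card (hp : p.Prime) {x : F} (hx : x ≠ 0)
    [DecidablePred fun a : Fin (ν + 1) → F => linL p ν a x = 0] :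
    (Finset.univ.filter fun a : Fin (ν + 1) → F => linL p ν a x = 0).card =
      Fintype.card F ^ ν := by
  classical
  have key : (Finset.univ.filter fun a : Fin (ν + 1) → F => linL p ν a x = 0).card =
      (Finset.univ : Finset (Fin ν → F)).card := by
    refine Finset.card_bij' (fun a _ => Fin.tail a)
      (fun b _ => Fin.cons (-(∑ j : Fin ν, b j * x ^ p ^ ((j : ℕ) + 1)) / x) b) ?_ ?_ ?_ ?_
    · intro a ha; exact Finset.mem_univ _
    · intro b _
      rw [Finset.mem_filter]
      simp only [Finset.mem_univ, true_and, linL]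
      rw [Fin.sum_univ_succ]
      simp only [Fin.cons_zero, Fin.cons_succ, Fin.val_zero, pow_zero, pow_one, Fin.val_succ]
      rw [div_mul_cancel₀ _ hx]
      ring
    · intro a ha
      rw [Finset.mem_filter] at ha
      simp only [Finset.mem_univ, true_and, linL] at ha
      rw [Fin.sum_univ_succ] at ha
      simp only [Fin.val_zero, pow_zero, pow_one, Fin.val_succ] at ha
      have h0 : a 0 = -(∑ j : Fin ν, Fin.tail a j * x ^ p ^ ((j : ℕ) + 1)) / x := by
        field_simp [Fin.tail]
        simp only [Fin.tail]
        linear_combination ha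
      conv_rhs => rw [← Fin.cons_self_tail a]
      rw [h0]
    · intro b _
      funext j
      simp [Fin.tail, Fin.cons_succ]
  rw [key]
  simp

end Aux

/-- The number of linearized polynomials of degree at most `ν` over `F_q`
(`q = p^m`) that are permutation polynomials is at least
`(1 - 1/(p-1) + 1/(q(p-1))) q^{ν+1}`, which is at least `q^ν`. -/
theorem count_linearized_permutation_polynomials
    (p m ν : ℕ) (hp : p.Prime) (hm : 1 ≤ m)
    (F : Type) [Field F] [Fintype F] (hcard : Fintype.card F = p ^ m) :
    (1 - 1 / ((p : ℝ) - 1) + 1 / (((p : ℝ) ^ m) * ((p : ℝ) - 1))) * ((p : ℝ) ^ m) ^ (ν + 1) ≤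
      ({a : Fin (ν + 1) → F |
          Function.Bijective fun x : F =>
            eval x (∑ i : Fin (ν + 1), C (a i) * X ^ p ^ (i : ℕ))}.ncard : ℝ) ∧
    ((p : ℝ) ^ m) ^ ν ≤
      (1 - 1 / ((p : ℝ) - 1) + 1 / (((p : ℝ) ^ m) * ((p : ℝ) - 1))) * ((p : ℝ) ^ m) ^ (ν + 1) := by
  classical
  haveI : Fact p.Prime := ⟨hp⟩
  -- the characteristic of F is p
  obtain ⟨p', hc⟩ := CharP.exists F
  haveI := hc
  obtain ⟨n, hp', hn⟩ := FiniteField.card F p'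
  have hpp' : p' = p := by
    have hdvd : p' ∣ p ^ m := by
      rw [← hcard, hn]
      exact dvd_pow_self p' n.ne_zero
    exact (Nat.prime_dvd_prime_iff_eq hp' hp).mp (hp'.dvd_of_dvd_pow hdvd)
  haveI hchar : CharP F p := hpp' ▸ hc
  set q : ℕ := p ^ m with hq
  -- basic facts
  have hp2 : 2 ≤ p := hp.two_le
  have hq2 : 2 ≤ q := by
    calc 2 ≤ p := hp2
    _ = p ^ 1 := (pow_one p).symm
    _ ≤ p ^ m := Nat.pow_le_pow_right hp.one_le hm
  -- Finsets of good/bad coefficient vectors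
  set A := Fin (ν + 1) → F with hA
  set S : Finset A := Finset.univ.filter
      (fun a : A => Function.Bijective fun x : F => linL p ν a x) with hS
  set T : Finset A := Finset.univ.filter
      (fun a : A => ¬ Function.Bijective fun x : F => linL p ν a x) with hT
  have hST : S.card + T.card = q ^ (ν + 1) := by
    rw [hS, hT, Finset.card_filter_add_card_filter_not]
    simp [hA, hcard]
  -- the set in the statement is ↑S
  have hset : ({a : A |
          Function.Bijective fun x : F =>
            eval x (∑ i : Fin (ν + 1), C (a i) * X ^ p ^ (i : ℕ))} : Set A) = ↑S := by
    ext a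
    have : (fun x : F => eval x (∑ i : Fin (ν + 1), C (a i) * X ^ p ^ (i : ℕ)))
        = fun x : F => linL p ν a x := funext fun x => linL_eval a x
    simp [hS, this]
  -- set of nonzero elements
  set X : Finset F := Finset.univ.filter (fun x : F => x ≠ 0) with hX
  have hXcard : X.card = q - 1 := by
    rw [hX, Finset.filter_ne' Finset.univ 0, Finset.card_erase_of_mem (Finset.mem_univ 0)]
    simp [hcard]
  -- double counting
  have swap : ∑ x ∈ X, (Finset.univ.filter fun a : A => linL p ν a x = 0).card
      = ∑ a : A, (X.filter fun x => linL p ν a x = 0).card := by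
    simp only [Finset.card_filter]
    rw [Finset.sum_comm]
  have lhs_eq : ∑ x ∈ X, (Finset.univ.filter fun a : A => linL p ν a x = 0).card
      = (q - 1) * q ^ ν := by
    have hx' : ∀ x ∈ X, (Finset.univ.filter fun a : A => linL p ν a x = 0).card = q ^ ν := by
      intro x hxX
      rw [fiber_card hp (by simpa [hX] using hxX), hcard]
    rw [Finset.sum_congr rfl hx', Finset.sum_const, hXcard, smul_eq_mul]
  -- each bad a has at least p - 1 nonzero roots
  have bad_roots : ∀ a ∈ T, p - 1 ≤ (X.filter fun x => linL p ν a x = 0).card := by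
    intro a haT
    rw [hT, Finset.mem_filter] at haT
    have hninj : ¬ Function.Injective fun x : F => linL p ν a x := by
      intro h
      exact haT.2 (Finite.injective_iff_bijective.mp h)
    rw [Function.not_injective_iff] at hninj
    obtain ⟨u, v, huv, hne⟩ := hninj
    set w : F := u - v with hw
    have hw0 : w ≠ 0 := sub_ne_zero.mpr hne
    have hroot : linL p ν a w = 0 := by
      have huv' : linL p ν a u = linL p ν a v := huv
      have h1 := linL_add (p := p) a w v
      rw [hw, sub_add_cancel] at h1
      rw [huv'] at h1
      show linL p ν a (u - v) = 0
      linear_combination -h1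
    -- the map k ↦ (k+1) • w gives p - 1 distinct nonzero roots
    have : ((Finset.univ : Finset (Fin (p - 1))).card : ℕ)
        ≤ (X.filter fun x => linL p ν a x = 0).card := by
      refine Finset.card_le_card_of_injOn (fun k : Fin (p - 1) => ((k : ℕ) + 1) • w) ?_ ?_
      · intro k _
        rw [Finset.mem_coe, Finset.mem_filter, hX, Finset.mem_filter]
        simp only [Finset.mem_univ, true_and]
        refine ⟨?_, ?_⟩
        · intro h
          rw [nsmul_eq_mul] at h
          rcases mul_eq_zero.mp h with h' | h'
          · rw [CharP.cast_eq_zero_iff F p] at h'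
            have hklt : (k : ℕ) + 1 < p := by
              have := k.2; omega
            have := Nat.le_of_dvd (by omega) h'
            omega
          · exact hw0 h'
        · rw [linL_nsmul (p := p) hp, hroot, smul_zero]
      · intro k _ l _ hkl
        simp only [nsmul_eq_mul] at hkl
        have := mul_right_cancel₀ hw0 hkl
        have hcast : ((k : ℕ) + 1) ≡ ((l : ℕ) + 1) [MOD p] := by
          exact_mod_cast (CharP.natCast_eq_natCast F p).mp (by exact_mod_cast this)
        have hk := k.2; have hl := l.2
        have : (k : ℕ) + 1 = (l : ℕ) + 1 :=
          Nat.ModEq.eq_of_lt_of_lt hcast (by omega) (by omega)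
        exact Fin.ext (by omega)
    simpa using this
  -- main counting inequality in ℕ
  have hmain : (p - 1) * T.card ≤ (q - 1) * q ^ ν := by
    calc (p - 1) * T.card = ∑ _a ∈ T, (p - 1) := by rw [Finset.sum_const, smul_eq_mul, mul_comm]
    _ ≤ ∑ a ∈ T, (X.filter fun x => linL p ν a x = 0).card := Finset.sum_le_sum bad_roots
    _ ≤ ∑ a : A, (X.filter fun x => linL p ν a x = 0).card :=
        Finset.sum_le_sum_of_subset (Finset.subset_univ T)
    _ = (q - 1) * q ^ ν := by rw [← swap, lhs_eq]
  -- move to the reals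
  set P : ℝ := (p : ℝ) with hP
  set Q : ℝ := (p : ℝ) ^ m with hQ
  have hP1 : (1 : ℝ) < P := by rw [hP]; exact_mod_cast hp.one_lt
  have hP2 : (2 : ℝ) ≤ P := by rw [hP]; exact_mod_cast hp2
  have hP1pos : (0 : ℝ) < P - 1 := by linarith
  have hQ1 : (1 : ℝ) < Q := by
    rw [hQ]
    have : ((1:ℕ):ℝ) < ((p ^ m : ℕ) : ℝ) := by exact_mod_cast (by omega : 1 < p ^ m)
    push_cast at this
    exact this
  have hQpos : (0 : ℝ) < Q := by linarith
  have hkey : (P - 1) * (T.card : ℝ) ≤ (Q - 1) * Q ^ ν := by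
    have h1 : ((p - 1 : ℕ) : ℝ) = P - 1 := by
      rw [Nat.cast_sub hp.one_le]; simp [hP]
    have hqQ : ((q : ℕ) : ℝ) = Q := by rw [hq, hQ]; push_cast; ring
    have h2 : ((q - 1 : ℕ) : ℝ) = Q - 1 := by
      rw [Nat.cast_sub (by omega), hqQ]; norm_num
    have h3 : ((q ^ ν : ℕ) : ℝ) = Q ^ ν := by push_cast [hqQ]; ring
    calc (P - 1) * (T.card : ℝ) = ((p - 1) * T.card : ℕ) := by push_cast [h1]; ring
    _ ≤ ((q - 1) * q ^ ν : ℕ) := by exact_mod_cast hmain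
    _ = (Q - 1) * Q ^ ν := by push_cast [h2, h3]; ring
  have hScard : (S.card : ℝ) = Q ^ (ν + 1) - T.card := by
    have : ((q ^ (ν + 1) : ℕ) : ℝ) = Q ^ (ν + 1) := by rw [hq, hQ]; push_cast; ring
    rw [← this, ← hST]; push_cast; ring
  have hexpr : (1 - 1 / (P - 1) + 1 / (Q * (P - 1))) * Q ^ (ν + 1)
      = Q ^ (ν + 1) - (Q - 1) * Q ^ ν / (P - 1) := by
    field_simp
    ring
  constructor
  · rw [hset, Set.ncard_coe_finset, hexpr]
    have h1 : Q ^ (ν + 1) - (S.card : ℝ) ≤ (Q - 1) * Q ^ ν / (P - 1) := by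
      rw [le_div_iff₀ hP1pos]
      rw [hScard]
      calc (Q ^ (ν + 1) - (Q ^ (ν + 1) - (T.card : ℝ))) * (P - 1)
          = (P - 1) * (T.card : ℝ) := by ring
      _ ≤ (Q - 1) * Q ^ ν := hkey
    linarith
  · rw [hexpr]
    have h1 : (Q - 1) * Q ^ ν / (P - 1) ≤ (Q - 1) * Q ^ ν := by
      apply div_le_self
      · nlinarith [pow_pos hQpos ν]
      · linarith
    have h2 : Q ^ (ν + 1) = Q * Q ^ ν := by ring
    nlinarith [pow_pos hQpos ν]
end

section
/- For any two permutations σ₁, σ₂ ∈ S_n, the Kendall tau distance is at least the ℓ₁ distance between their inversion vectors: d_τ(σ₁,σ₂) ≥ Σ_{i=1}^{n-1} |x_{σ₁}(i) - x_{σ₂}(i)|. -/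
/-- `s` is an adjacent transposition: it swaps two adjacent positions. -/
def IsAdjSwap {n : ℕ} (s : Equiv.Perm (Fin n)) : Prop :=
  ∃ i j : Fin n, (j : ℕ) = (i : ℕ) + 1 ∧ s = Equiv.swap i j

/-- The Kendall tau distance: the minimum number of adjacent transpositions needed to
transform `σ` into `π`.  (In the paper's convention, permutations act on the right:
the product `πσ` sends `i ↦ σ(π(i))`, i.e. equals `σ * π` in Mathlib's convention; so
applying an adjacent transposition error `s` to `σ` yields `σ * s`.) -/
noncomputable def kendall {n : ℕ} (σ π : Equiv.Perm (Fin n)) : ℕ :=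
  sInf {k : ℕ | ∃ l : List (Equiv.Perm (Fin n)),
    (∀ s ∈ l, IsAdjSwap s) ∧ l.length = k ∧ π = σ * l.prod}

/-- The inversion vector of `σ`: `invVec σ v` is the number of inversions of `σ` in
which `v` is the larger element, i.e. the number of `j < v` with `σ⁻¹(j) > σ⁻¹(v)`. -/
def invVec {n : ℕ} (σ : Equiv.Perm (Fin n)) (v : Fin n) : ℕ :=
  (Finset.univ.filter (fun j : Fin n => j < v ∧ σ⁻¹ v < σ⁻¹ j)).card

lemma adj_swap_lt_iff {n : ℕ} {i j : Fin n} (hij : (j:ℕ) = (i:ℕ) + 1) {x y : Fin n}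
    (h : x = y ∨ (x ≠ i ∧ x ≠ j) ∨ (y ≠ i ∧ y ≠ j)) :
    Equiv.swap i j x < Equiv.swap i j y ↔ x < y := by
  simp only [Equiv.swap_apply_def, Fin.lt_def, Fin.ext_iff, ne_eq] at *
  split_ifs <;> omega

lemma pair_lemma {n : ℕ} (σ : Equiv.Perm (Fin n)) {i j v jj : Fin n}
    (h : ¬(σ⁻¹ v = σ⁻¹ jj ∨ (σ⁻¹ v ≠ i ∧ σ⁻¹ v ≠ j) ∨ (σ⁻¹ jj ≠ i ∧ σ⁻¹ jj ≠ j))) :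
    (v = σ i ∧ jj = σ j) ∨ (v = σ j ∧ jj = σ i) := by
  push_neg at h
  obtain ⟨hne, hx, hy⟩ := h
  have hv : σ⁻¹ v = i ∨ σ⁻¹ v = j := by
    by_cases hc : σ⁻¹ v = i
    · exact Or.inl hc
    · exact Or.inr (hx hc)
  have hjj : σ⁻¹ jj = i ∨ σ⁻¹ jj = j := by
    by_cases hc : σ⁻¹ jj = i
    · exact Or.inl hc
    · exact Or.inr (hy hc)
  have conv : ∀ x y : Fin n, σ⁻¹ x = y → x = σ y := by
    intro x y hxy
    have := congrArg σ hxy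
    rwa [Equiv.Perm.inv_def, Equiv.apply_symm_apply] at this
  rcases hv with h1 | h1 <;> rcases hjj with h2 | h2
  · exact absurd (h1.trans h2.symm) hne
  · exact Or.inl ⟨conv _ _ h1, conv _ _ h2⟩
  · exact Or.inr ⟨conv _ _ h1, conv _ _ h2⟩
  · exact absurd (h1.trans h2.symm) hne

lemma step_bound {n : ℕ} (σ : Equiv.Perm (Fin n)) {s : Equiv.Perm (Fin n)} (hs : IsAdjSwap s) :
    ∑ v : Fin n, ((invVec (σ * s) v : ℤ) - (invVec σ v : ℤ)).natAbs ≤ 1 := by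
  obtain ⟨i, j, hij, rfl⟩ := hs
  have hij' : i ≠ j := by
    intro h; rw [h] at hij; omega
  have hinv : ∀ v, (σ * Equiv.swap i j)⁻¹ v = Equiv.swap i j (σ⁻¹ v) := by
    intro v
    simp [mul_inv_rev, Equiv.swap_inv, Equiv.Perm.mul_apply]
  have hab : σ i ≠ σ j := fun h => hij' (σ.injective h)
  set w := max (σ i) (σ j) with hw
  set m := min (σ i) (σ j) with hm
  have hmw : m < w := min_lt_max.mpr hab
  -- coordinates other than w are unchanged
  have key : ∀ v : Fin n, v ≠ w →
      invVec (σ * Equiv.swap i j) v = invVec σ v := by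
    intro v hv
    unfold invVec
    congr 1
    apply Finset.filter_congr
    intro jj _
    simp only [hinv]
    have side : jj < v →
        (σ⁻¹ v = σ⁻¹ jj ∨ (σ⁻¹ v ≠ i ∧ σ⁻¹ v ≠ j) ∨ (σ⁻¹ jj ≠ i ∧ σ⁻¹ jj ≠ j)) := by
      intro c4
      by_contra hc
      rcases pair_lemma σ hc with ⟨hv1, hjj1⟩ | ⟨hv1, hjj1⟩
      · rw [hv1, hjj1] at c4
        exact hv (hv1.trans (max_eq_left c4.le).symm)
      · rw [hv1, hjj1] at c4
        exact hv (hv1.trans (max_eq_right c4.le).symm)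
    constructor <;> rintro ⟨h1, h2⟩ <;> refine ⟨h1, ?_⟩
    · rwa [adj_swap_lt_iff hij (side h1)] at h2
    · rwa [adj_swap_lt_iff hij (side h1)]
  -- at w the change is at most 1
  have keyw : ((invVec (σ * Equiv.swap i j) w : ℤ) - (invVec σ w : ℤ)).natAbs ≤ 1 := by
    set A := Finset.univ.filter
      (fun jj : Fin n => jj < w ∧ (σ * Equiv.swap i j)⁻¹ w < (σ * Equiv.swap i j)⁻¹ jj) with hA
    set B := Finset.univ.filter (fun jj : Fin n => jj < w ∧ σ⁻¹ w < σ⁻¹ jj) with hB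
    have side : ∀ jj : Fin n, jj < w → jj ≠ m →
        (σ⁻¹ w = σ⁻¹ jj ∨ (σ⁻¹ w ≠ i ∧ σ⁻¹ w ≠ j) ∨ (σ⁻¹ jj ≠ i ∧ σ⁻¹ jj ≠ j)) := by
      intro jj hlt hne
      by_contra hc
      rcases pair_lemma σ hc with ⟨h1, rfl⟩ | ⟨h1, rfl⟩
      · have hle : σ j ≤ σ i := by
          rw [hw] at h1; exact max_eq_left_iff.mp h1
        exact hne (by rw [hm]; exact (min_eq_right hle).symm)
      · have hle : σ i ≤ σ j := by
          rw [hw] at h1; exact max_eq_right_iff.mp h1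
        exact hne (by rw [hm]; exact (min_eq_left hle).symm)
    have hAB : A ⊆ B ∪ {m} := by
      intro jj hjj
      rw [hA, Finset.mem_filter] at hjj
      obtain ⟨_, h1, h2⟩ := hjj
      by_cases hne : jj = m
      · simp [hne]
      · rw [Finset.mem_union, hB, Finset.mem_filter]
        left
        rw [hinv, hinv, adj_swap_lt_iff hij (side jj h1 hne)] at h2
        exact ⟨Finset.mem_univ _, h1, h2⟩
    have hBA : B ⊆ A ∪ {m} := by
      intro jj hjj
      rw [hB, Finset.mem_filter] at hjj
      obtain ⟨_, h1, h2⟩ := hjj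
      by_cases hne : jj = m
      · simp [hne]
      · rw [Finset.mem_union, hA, Finset.mem_filter]
        left
        refine ⟨Finset.mem_univ _, h1, ?_⟩
        rw [hinv, hinv, adj_swap_lt_iff hij (side jj h1 hne)]
        exact h2
    have c1 : A.card ≤ B.card + 1 :=
      le_trans (Finset.card_le_card hAB) (le_trans (Finset.card_union_le _ _) (by simp))
    have c2 : B.card ≤ A.card + 1 :=
      le_trans (Finset.card_le_card hBA) (le_trans (Finset.card_union_le _ _) (by simp))
    have eA : invVec (σ * Equiv.swap i j) w = A.card := rfl
    have eB : invVec σ w = B.card := rfl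
    rw [eA, eB]
    omega
  calc ∑ v : Fin n, ((invVec (σ * Equiv.swap i j) v : ℤ) - (invVec σ v : ℤ)).natAbs
      = ((invVec (σ * Equiv.swap i j) w : ℤ) - (invVec σ w : ℤ)).natAbs := by
        apply Finset.sum_eq_single_of_mem w (Finset.mem_univ w)
        intro v _ hv
        rw [key v hv]
        simp
    _ ≤ 1 := keyw

lemma list_bound {n : ℕ} : ∀ (l : List (Equiv.Perm (Fin n))), (∀ s ∈ l, IsAdjSwap s) →
    ∀ σ : Equiv.Perm (Fin n),
    ∑ v : Fin n, ((invVec (σ * l.prod) v : ℤ) - (invVec σ v : ℤ)).natAbs ≤ l.length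
  | [], _, σ => by simp
  | s :: l, h, σ => by
    have h1 := step_bound σ (h s List.mem_cons_self)
    have h2 := list_bound l (fun t ht => h t (List.mem_cons_of_mem _ ht)) (σ * s)
    calc ∑ v : Fin n, ((invVec (σ * (s :: l).prod) v : ℤ) - (invVec σ v : ℤ)).natAbs
        ≤ ∑ v : Fin n, ((((invVec ((σ * s) * l.prod) v : ℤ) - (invVec (σ * s) v : ℤ)).natAbs)
            + (((invVec (σ * s) v : ℤ) - (invVec σ v : ℤ)).natAbs)) := by
          apply Finset.sum_le_sum
          intro v _
          rw [List.prod_cons, ← mul_assoc]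
          have : (invVec (σ * s * l.prod) v : ℤ) - (invVec σ v : ℤ) =
              ((invVec (σ * s * l.prod) v : ℤ) - (invVec (σ * s) v : ℤ)) +
              ((invVec (σ * s) v : ℤ) - (invVec σ v : ℤ)) := by ring
          rw [this]
          exact Int.natAbs_add_le _ _
      _ = (∑ v : Fin n, ((invVec ((σ * s) * l.prod) v : ℤ) - (invVec (σ * s) v : ℤ)).natAbs)
            + ∑ v : Fin n, ((invVec (σ * s) v : ℤ) - (invVec σ v : ℤ)).natAbs := by
          rw [Finset.sum_add_distrib]
      _ ≤ l.length + 1 := Nat.add_le_add h2 h1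
      _ = (s :: l).length := by simp

/-- The Kendall tau distance between two permutations is at least the `ℓ₁` distance
between their inversion vectors. -/
theorem kendall_ge_l1_of_inversion_vectors
    (n : ℕ) (σ₁ σ₂ : Equiv.Perm (Fin n)) :
    ∑ v : Fin n, ((invVec σ₁ v : ℤ) - (invVec σ₂ v : ℤ)).natAbs ≤ kendall σ₁ σ₂ := by
  apply le_csInf
  · -- nonemptiness: adjacent transpositions generate the symmetric group
    cases n with
    | zero =>
      refine ⟨0, [], by simp, rfl, ?_⟩
      simp [Subsingleton.elim σ₂ (σ₁ * List.prod [])]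
    | succ m =>
      have hmem : σ₁⁻¹ * σ₂ ∈
          Submonoid.closure (Set.range fun i : Fin m => Equiv.swap i.castSucc i.succ) := by
        rw [Equiv.Perm.mclosure_swap_castSucc_succ m]
        trivial
      obtain ⟨l, hl, hprod⟩ := Submonoid.exists_list_of_mem_closure hmem
      refine ⟨l.length, l, ?_, rfl, ?_⟩
      · intro s hs
        obtain ⟨i, rfl⟩ := hl s hs
        exact ⟨i.castSucc, i.succ, by simp, rfl⟩
      · rw [hprod, ← mul_assoc, mul_inv_cancel, one_mul]
  · rintro k ⟨l, hl, rfl, hprod⟩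
    have := list_bound l hl σ₁
    rw [← hprod] at this
    calc ∑ v : Fin n, ((invVec σ₁ v : ℤ) - (invVec σ₂ v : ℤ)).natAbs
        = ∑ v : Fin n, ((invVec σ₂ v : ℤ) - (invVec σ₁ v : ℤ)).natAbs := by
          apply Finset.sum_congr rfl
          intro v _
          omega
      _ ≤ l.length := this
end

section
/- Minimum-cost error distribution: let q ≥ 2, t ≥ 0 be integers and s = ⌊(t+1)/(2(q-1))⌋. Then the minimum of Σ_{j=1}^{l-1} j·t_j over nonnegative integers t_j with t_j ≤ 2(q-1) for all j and Σ_j t_j ≥ t+1 (assuming l large enough that a feasible point exists, e.g. 2(q-1)(l-1) ≥ t+1) equals (t+1 − (q-1)s)(s+1). -/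
private lemma gauss_icc (s : ℕ) : 2 * ∑ j ∈ Finset.Icc 1 s, j = s * (s + 1) := by
  induction s with
  | zero => simp
  | succ n ih =>
    rw [Finset.sum_Icc_succ_top (by omega)]
    nlinarith [ih]

private lemma reflect_icc (s : ℕ) :
    ∑ j ∈ Finset.Icc 1 s, (s + 1 - j) = ∑ j ∈ Finset.Icc 1 s, j := by
  apply Finset.sum_nbij' (fun j => s + 1 - j) (fun j => s + 1 - j) <;>
    intro a ha <;> simp only [Finset.mem_Icc] at * <;> omega

/-- Minimum-cost error distribution: for integers `q ≥ 2`, `t ≥ 0`, with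
`s = ⌊(t+1)/(2(q-1))⌋`, the minimum of `∑_{j=1}^{l-1} j·t_j` over nonnegative integers
`t_j ≤ 2(q-1)` with `∑_j t_j ≥ t+1` (assuming feasibility, `2(q-1)(l-1) ≥ t+1`)
equals `(t+1 − (q-1)s)(s+1)`. -/
theorem min_cost_error_distribution
    (q t l : ℕ) (hq : 2 ≤ q) (hfeas : t + 1 ≤ 2 * (q - 1) * (l - 1)) :
    IsLeast
      {c : ℕ | ∃ tj : ℕ → ℕ,
        (∀ j ∈ Finset.Icc 1 (l - 1), tj j ≤ 2 * (q - 1)) ∧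
        (t + 1 ≤ ∑ j ∈ Finset.Icc 1 (l - 1), tj j) ∧
        c = ∑ j ∈ Finset.Icc 1 (l - 1), j * tj j}
      ((t + 1 - (q - 1) * ((t + 1) / (2 * (q - 1)))) * ((t + 1) / (2 * (q - 1)) + 1)) := by
  set m := 2 * (q - 1) with hm
  set L := l - 1 with hL
  set s := (t + 1) / m with hs
  have hm0 : 0 < m := by omega
  set r := (t + 1) % m with hr
  have hdiv : m * s + r = t + 1 := Nat.div_add_mod (t + 1) m
  have hrm : r < m := Nat.mod_lt _ hm0
  have hsL : s ≤ L := by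
    have h1 : s ≤ m * L / m := Nat.div_le_div_right hfeas
    rwa [Nat.mul_div_cancel_left _ hm0] at h1
  have hqs : (q - 1) * s ≤ t + 1 := by
    have : (q - 1) * s ≤ m * s := by
      apply Nat.mul_le_mul_right; omega
    omega
  -- the target value, rewritten
  have htarget : (t + 1 - (q - 1) * s) * (s + 1) = (q - 1) * s * (s + 1) + r * (s + 1) := by
    have h1 : t + 1 - (q - 1) * s = (q - 1) * s + r := by
      have : m * s = (q - 1) * s + (q - 1) * s := by rw [hm]; ring
      omega
    rw [h1]; ring
  constructor
  · -- membership: greedy witness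
    refine ⟨fun j => if j ≤ s then m else if j = s + 1 then r else 0, ?_, ?_, ?_⟩
    · intro j _
      dsimp only
      split
      · exact le_rfl
      · split <;> omega
    · -- sum of tj = t + 1
      dsimp only
      have hsplit : Finset.Icc 1 L = Finset.Icc 1 s ∪ Finset.Ioc s L := by
        rw [show Finset.Icc 1 L = Finset.Ioc 0 L from Finset.Icc_add_one_left_eq_Ioc 0 L,
          show Finset.Icc 1 s = Finset.Ioc 0 s from Finset.Icc_add_one_left_eq_Ioc 0 s]
        exact (Finset.Ioc_union_Ioc_eq_Ioc (Nat.zero_le s) hsL).symm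
      have hdisj : Disjoint (Finset.Icc 1 s) (Finset.Ioc s L) := by
        simp only [Finset.disjoint_left, Finset.mem_Icc, Finset.mem_Ioc]
        omega
      rw [hsplit, Finset.sum_union hdisj]
      have h1 : ∑ j ∈ Finset.Icc 1 s, (if j ≤ s then m else if j = s + 1 then r else 0)
          = m * s := by
        rw [Finset.sum_congr rfl (fun j hj => by
          simp only [Finset.mem_Icc] at hj
          rw [if_pos hj.2])]
        simp [Nat.card_Icc, Nat.mul_comm]
      have h2 : ∑ j ∈ Finset.Ioc s L, (if j ≤ s then m else if j = s + 1 then r else 0)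
          = if s + 1 ∈ Finset.Ioc s L then r else 0 := by
        rw [Finset.sum_congr rfl (fun j hj => by
          simp only [Finset.mem_Ioc] at hj
          rw [if_neg (by omega)])]
        exact Finset.sum_ite_eq' _ _ (fun _ => r)
      rw [h1, h2]
      split
      · omega
      · rename_i hnot
        simp only [Finset.mem_Ioc] at hnot
        have hLs : L ≤ s := by omega
        have : L = s := le_antisymm hLs hsL
        have : t + 1 ≤ m * s := by rw [← this]; exact hfeas
        omega
    · -- cost equals target
      dsimp only
      have hsplit : Finset.Icc 1 L = Finset.Icc 1 s ∪ Finset.Ioc s L := by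
        rw [show Finset.Icc 1 L = Finset.Ioc 0 L from Finset.Icc_add_one_left_eq_Ioc 0 L,
          show Finset.Icc 1 s = Finset.Ioc 0 s from Finset.Icc_add_one_left_eq_Ioc 0 s]
        exact (Finset.Ioc_union_Ioc_eq_Ioc (Nat.zero_le s) hsL).symm
      have hdisj : Disjoint (Finset.Icc 1 s) (Finset.Ioc s L) := by
        simp only [Finset.disjoint_left, Finset.mem_Icc, Finset.mem_Ioc]
        omega
      rw [hsplit, Finset.sum_union hdisj]
      have h1 : ∑ j ∈ Finset.Icc 1 s, j * (if j ≤ s then m else if j = s + 1 then r else 0)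
          = (q - 1) * (s * (s + 1)) := by
        rw [Finset.sum_congr rfl (fun j hj => by
          simp only [Finset.mem_Icc] at hj
          rw [if_pos hj.2])]
        rw [← Finset.sum_mul, hm]
        have hg := gauss_icc s
        have e : (∑ j ∈ Finset.Icc 1 s, j) * (2 * (q - 1))
            = (q - 1) * (2 * ∑ j ∈ Finset.Icc 1 s, j) := by ring
        rw [e, hg]
      have h2 : ∑ j ∈ Finset.Ioc s L, j * (if j ≤ s then m else if j = s + 1 then r else 0)
          = if s + 1 ∈ Finset.Ioc s L then (s + 1) * r else 0 := by
        have e : ∀ j ∈ Finset.Ioc s L,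
            j * (if j ≤ s then m else if j = s + 1 then r else 0)
              = if j = s + 1 then j * r else 0 := by
          intro j hj
          simp only [Finset.mem_Ioc] at hj
          rw [if_neg (by omega), mul_ite, mul_zero]
        rw [Finset.sum_congr rfl e]
        exact Finset.sum_ite_eq' _ _ (fun j => j * r)
      rw [h1, h2, htarget]
      split
      · ring
      · rename_i hnot
        simp only [Finset.mem_Ioc] at hnot
        have hLs : L = s := le_antisymm (by omega) hsL
        have : t + 1 ≤ m * s := by rw [← hLs]; exact hfeas
        have hr0 : r = 0 := by omega
        rw [hr0]; ring
  · -- lower bound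
    rintro c ⟨tj, hbd, hsum, hc⟩
    have hpoint : ∀ j ∈ Finset.Icc 1 L,
        (s + 1) * tj j ≤ j * tj j + (s + 1 - j) * m := by
      intro j hj
      by_cases hjs : j ≤ s
      · have he : (s + 1 - j) + j = s + 1 := by omega
        have : (s + 1) * tj j = (s + 1 - j) * tj j + j * tj j := by
          rw [← Nat.add_mul, he]
        rw [this]
        have : (s + 1 - j) * tj j ≤ (s + 1 - j) * m :=
          Nat.mul_le_mul_left _ (hbd j hj)
        omega
      · have : (s + 1) * tj j ≤ j * tj j := Nat.mul_le_mul_right _ (by omega)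
        omega
    have hsumle : ∑ j ∈ Finset.Icc 1 L, (s + 1) * tj j ≤
        ∑ j ∈ Finset.Icc 1 L, (j * tj j + (s + 1 - j) * m) :=
      Finset.sum_le_sum hpoint
    rw [Finset.sum_add_distrib, ← Finset.sum_mul, ← Finset.mul_sum] at hsumle
    -- compute ∑ (s+1-j) over Icc 1 L
    have hZ : ∑ j ∈ Finset.Icc 1 L, (s + 1 - j) = ∑ j ∈ Finset.Icc 1 s, (s + 1 - j) := by
      symm
      apply Finset.sum_subset
      · apply Finset.Icc_subset_Icc_right hsL
      · intro x hx hnx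
        simp only [Finset.mem_Icc] at hx hnx
        omega
    have hZ2 : 2 * ∑ j ∈ Finset.Icc 1 L, (s + 1 - j) = s * (s + 1) := by
      rw [hZ, reflect_icc, gauss_icc]
    have hZm : (∑ j ∈ Finset.Icc 1 L, (s + 1 - j)) * m = (q - 1) * s * (s + 1) := by
      rw [hm]
      have e : (∑ j ∈ Finset.Icc 1 L, (s + 1 - j)) * (2 * (q - 1))
          = (q - 1) * (2 * ∑ j ∈ Finset.Icc 1 L, (s + 1 - j)) := by ring
      rw [e, hZ2]; ring
    rw [hZm] at hsumle
    have hmain : (s + 1) * (t + 1) ≤ (∑ j ∈ Finset.Icc 1 L, j * tj j) + (q - 1) * s * (s + 1) := by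
      calc (s + 1) * (t + 1) ≤ (s + 1) * ∑ j ∈ Finset.Icc 1 L, tj j :=
            Nat.mul_le_mul_left _ hsum
        _ ≤ _ := hsumle
    rw [hc, htarget]
    have hexp : (s + 1) * (t + 1) = 2 * ((q - 1) * s * (s + 1)) + r * (s + 1) := by
      rw [← hdiv, hm]; ring
    linarith [hmain, hexp]
end
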